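/- arXiv:2101.04765 — 3 statements merged into one kernel-verified Lean document; each statement's English description precedes it below -/
import Mathlib

section
/- The normalized projected Cook–Kress distance between two incomplete ratings is always between 0 and 1, provided each rating takes values in the interval [ℓ, u] with u > ℓ and the intersection of their domains has at least 2 elements. -/
open Finset MeasureTheory ENNReal

lemma nat_prod_le (k1 k2 m : ℕ) (h : k1 + k2 = m) :
    k1 * k2 ≤ ((m + 1) / 2) * (m / 2) := by
  obtain ⟨q, hq⟩ | ⟨q, hq⟩ := Nat.even_or_odd m
  · have h1 : (m + 1) / 2 = q := by omega
    have h2 : m / 2 = q := by omega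
    rw [h1, h2]
    zify
    nlinarith [sq_nonneg ((k1 : ℤ) - k2)]
  · have h1 : (m + 1) / 2 = q + 1 := by omega
    have h2 : m / 2 = q := by omega
    rw [h1, h2]
    zify
    have hne : (k1 : ℤ) - k2 ≠ 0 := by omega
    have h3 : (1 : ℤ) ≤ ((k1 : ℤ) - k2) ^ 2 := by
      rw [← sq_abs]
      have := Int.one_le_abs hne
      nlinarith
    nlinarith

lemma key_sum_bound {V : Type*} (S : Finset V) (f : V → ℝ) (a b : ℝ) (hab : a ≤ b)
    (hf : ∀ i ∈ S, f i ∈ Set.Icc a b) :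
    ∑ i ∈ S, ∑ j ∈ S, |f i - f j| ≤
      2 * (((S.card + 1) / 2 : ℕ) : ℝ) * ((S.card / 2 : ℕ) : ℝ) * (b - a) := by
  classical
  set m := S.card with hm
  set K : ℕ := 2 * ((m + 1) / 2) * (m / 2) with hK
  set E : V → V → Set ℝ := fun i j =>
    Set.Ioc a b ∩ Set.Ico (min (f i) (f j)) (max (f i) (f j)) with hE
  have hEmeas : ∀ i j, MeasurableSet (E i j) := fun i j =>
    (measurableSet_Ioc).inter measurableSet_Ico
  -- volume of E i j
  have hvol : ∀ i ∈ S, ∀ j ∈ S, volume (E i j) = ENNReal.ofReal (|f i - f j|) := by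
    intro i hi j hj
    have hia := hf i hi
    have hja := hf j hj
    have h1 : Set.Ioo (min (f i) (f j)) (max (f i) (f j)) ⊆ E i j := by
      intro t ht
      refine ⟨⟨lt_of_le_of_lt (le_min hia.1 hja.1) ht.1,
        le_of_lt (lt_of_lt_of_le ht.2 (max_le hia.2 hja.2))⟩, le_of_lt ht.1, ht.2⟩
    have h2 : E i j ⊆ Set.Icc (min (f i) (f j)) (max (f i) (f j)) := by
      intro t ht
      exact ⟨ht.2.1, le_of_lt ht.2.2⟩
    have hle1 : volume (Set.Ioo (min (f i) (f j)) (max (f i) (f j))) ≤ volume (E i j) :=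
      measure_mono h1
    have hle2 : volume (E i j) ≤ volume (Set.Icc (min (f i) (f j)) (max (f i) (f j))) :=
      measure_mono h2
    rw [Real.volume_Ioo] at hle1
    rw [Real.volume_Icc] at hle2
    have : volume (E i j) = ENNReal.ofReal (max (f i) (f j) - min (f i) (f j)) :=
      le_antisymm hle2 hle1
    rw [this, max_sub_min_eq_abs, abs_sub_comm]
  -- pointwise bound on indicator sum
  have hpt : ∀ t : ℝ, ∑ i ∈ S, ∑ j ∈ S, (E i j).indicator (1 : ℝ → ℝ≥0∞) t ≤
      (Set.Ioc a b).indicator (fun _ => (K : ℝ≥0∞)) t := by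
    intro t
    by_cases ht : t ∈ Set.Ioc a b
    · rw [Set.indicator_of_mem ht]
      set A : V → ℝ≥0∞ := fun i => if f i ≤ t then 1 else 0 with hA
      set B : V → ℝ≥0∞ := fun i => if f i ≤ t then 0 else 1 with hB
      have hsplit : ∀ i ∈ S, ∀ j ∈ S, (E i j).indicator (1 : ℝ → ℝ≥0∞) t =
          A i * B j + B i * A j := by
        intro i _ j _
        rcases le_or_gt (f i) t with hi' | hi' <;> rcases le_or_gt (f j) t with hj' | hj'
        · have : t ∉ E i j := by
            intro h
            exact absurd h.2.2 (not_lt.2 (max_le hi' hj'))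
          simp [Set.indicator_of_notMem this, hA, hB, hi', hj']
        · have : t ∈ E i j := ⟨ht, le_trans (min_le_left _ _) hi',
            lt_of_lt_of_le hj' (le_max_right _ _)⟩
          simp [Set.indicator_of_mem this, hA, hB, hi', hj', not_le.2 hj']
        · have : t ∈ E i j := ⟨ht, le_trans (min_le_right _ _) hj',
            lt_of_lt_of_le hi' (le_max_left _ _)⟩
          simp [Set.indicator_of_mem this, hA, hB, hi', hj', not_le.2 hi']
        · have : t ∉ E i j := by
            intro h
            exact absurd h.2.1 (not_le.2 (lt_min hi' hj'))
          simp [Set.indicator_of_notMem this, hA, hB, not_le.2 hi', not_le.2 hj']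
      rw [Finset.sum_congr rfl (fun i hi => Finset.sum_congr rfl (fun j hj => hsplit i hi j hj))]
      have hAsum : ∑ i ∈ S, A i = ((S.filter (fun i => f i ≤ t)).card : ℝ≥0∞) := by
        rw [hA]; simp [Finset.sum_ite, Finset.filter_not]
      have hBsum : ∑ i ∈ S, B i = ((S.filter (fun i => ¬ f i ≤ t)).card : ℝ≥0∞) := by
        rw [hB]
        rw [Finset.sum_ite]
        simp
      set k1 := (S.filter (fun i => f i ≤ t)).card with hk1
      set k2 := (S.filter (fun i => ¬ f i ≤ t)).card with hk2
      have hksum : k1 + k2 = m := by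
        rw [hk1, hk2, hm]
        exact Finset.card_filter_add_card_filter_not _
      calc ∑ i ∈ S, ∑ j ∈ S, (A i * B j + B i * A j)
          = (∑ i ∈ S, A i) * (∑ j ∈ S, B j) + (∑ i ∈ S, B i) * (∑ j ∈ S, A j) := by
            simp only [Finset.sum_add_distrib, ← Finset.mul_sum]
            rw [← Finset.sum_mul, ← Finset.sum_mul]
        _ = ((k1 * k2 + k2 * k1 : ℕ) : ℝ≥0∞) := by
            rw [hAsum, hBsum]
            push_cast
            ring
        _ ≤ (K : ℝ≥0∞) := by
            have h := nat_prod_le k1 k2 m hksum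
            have hnat : k1 * k2 + k2 * k1 ≤ K := by
              rw [hK]
              calc k1 * k2 + k2 * k1 = 2 * (k1 * k2) := by ring
                _ ≤ 2 * (((m + 1) / 2) * (m / 2)) := Nat.mul_le_mul_left 2 h
                _ = 2 * ((m + 1) / 2) * (m / 2) := by ring
            exact_mod_cast Nat.cast_le.2 hnat
    · rw [Set.indicator_of_notMem ht]
      refine le_of_eq (Finset.sum_eq_zero fun i _ => Finset.sum_eq_zero fun j _ => ?_)
      refine Set.indicator_of_notMem (fun h => ht h.1) _
  -- sum of measures bound
  have hmeasbound : ∑ i ∈ S, ∑ j ∈ S, volume (E i j) ≤ (K : ℝ≥0∞) * ENNReal.ofReal (b - a) := by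
    have h1 : ∀ i ∈ S, ∀ j ∈ S, volume (E i j) = ∫⁻ t, (E i j).indicator 1 t := by
      intro i _ j _
      rw [lintegral_indicator_one (hEmeas i j)]
    calc ∑ i ∈ S, ∑ j ∈ S, volume (E i j)
        = ∫⁻ t, ∑ i ∈ S, ∑ j ∈ S, (E i j).indicator 1 t := by
          rw [lintegral_finset_sum]
          · exact Finset.sum_congr rfl fun i hi => by
              rw [lintegral_finset_sum]
              · exact Finset.sum_congr rfl fun j hj => h1 i hi j hj
              · exact fun j _ => measurable_one.indicator (hEmeas i j)
          · exact fun i _ => Finset.measurable_sum _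
              fun j _ => measurable_one.indicator (hEmeas i j)
      _ ≤ ∫⁻ t, (Set.Ioc a b).indicator (fun _ => (K : ℝ≥0∞)) t := lintegral_mono hpt
      _ = (K : ℝ≥0∞) * ENNReal.ofReal (b - a) := by
          rw [lintegral_indicator_const measurableSet_Ioc]
          simp [Real.volume_Ioc, mul_comm]
  -- put together
  have hfin : ∀ i ∈ S, ∀ j ∈ S, volume (E i j) ≠ ⊤ := by
    intro i hi j hj
    rw [hvol i hi j hj]
    exact ENNReal.ofReal_ne_top
  have heq : ∑ i ∈ S, ∑ j ∈ S, |f i - f j| =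
      (∑ i ∈ S, ∑ j ∈ S, volume (E i j)).toReal := by
    rw [ENNReal.toReal_sum (fun i hi => by
      exact (ENNReal.sum_lt_top.2 fun j hj => (hfin i hi j hj).lt_top).ne)]
    refine Finset.sum_congr rfl fun i hi => ?_
    rw [ENNReal.toReal_sum (fun j hj => hfin i hi j hj)]
    refine Finset.sum_congr rfl fun j hj => ?_
    rw [hvol i hi j hj, ENNReal.toReal_ofReal (abs_nonneg _)]
  rw [heq]
  have := ENNReal.toReal_mono (by
    exact ENNReal.mul_ne_top (ENNReal.natCast_ne_top K) ENNReal.ofReal_ne_top) hmeasbound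
  calc (∑ i ∈ S, ∑ j ∈ S, volume (E i j)).toReal
      ≤ ((K : ℝ≥0∞) * ENNReal.ofReal (b - a)).toReal := this
    _ = (K : ℝ) * (b - a) := by
        rw [ENNReal.toReal_mul, ENNReal.toReal_ofReal (by linarith)]
        simp
    _ = 2 * (((m + 1) / 2 : ℕ) : ℝ) * ((m / 2 : ℕ) : ℝ) * (b - a) := by
        rw [hK]; push_cast; ring

/-- The normalized projected Cook–Kress distance lies in [0,1]. -/
theorem npck_mem_unit_interval {V : Type*} [DecidableEq V]
    (A1 A2 : Finset V) (a1 a2 : V → ℝ) (ℓ u : ℝ) (hlu : ℓ < u)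
    (h1 : ∀ i ∈ A1, a1 i ∈ Set.Icc ℓ u) (h2 : ∀ i ∈ A2, a2 i ∈ Set.Icc ℓ u)
    (S : Finset V) (hS : S = A1 ∩ A2)
    (m : ℕ) (hm : m = S.card) (hm2 : 2 ≤ m)
    (C : ℝ) (hC : C = (4 * (u - ℓ) * ((m + 1) / 2 : ℕ) * ((m / 2 : ℕ) : ℝ))⁻¹)
    (d : ℝ)
    (hd : d = C * ∑ i ∈ S, ∑ j ∈ S, |(a1 i - a1 j) - (a2 i - a2 j)|) :
    0 ≤ d ∧ d ≤ 1 := by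
  have hR : (0 : ℝ) < u - ℓ := by linarith
  have hc1 : 1 ≤ ((m + 1) / 2 : ℕ) := by omega
  have hc2 : 1 ≤ (m / 2 : ℕ) := by omega
  have hc1' : (1 : ℝ) ≤ (((m + 1) / 2 : ℕ) : ℝ) := by exact_mod_cast hc1
  have hc2' : (1 : ℝ) ≤ ((m / 2 : ℕ) : ℝ) := by exact_mod_cast hc2
  have hdenpos : (0 : ℝ) < 4 * (u - ℓ) * ((m + 1) / 2 : ℕ) * ((m / 2 : ℕ) : ℝ) :=
    mul_pos (mul_pos (by linarith) (by linarith)) (by linarith)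
  have hCpos : 0 < C := by rw [hC]; exact inv_pos.2 hdenpos
  have hΔ : ∀ i ∈ S, (fun i => a1 i - a2 i) i ∈ Set.Icc (ℓ - u) (u - ℓ) := by
    intro i hi
    rw [hS, Finset.mem_inter] at hi
    have := h1 i hi.1
    have := h2 i hi.2
    constructor <;> simp only <;> [linarith [ (h1 i hi.1).1, (h2 i hi.2).2 ];
      linarith [ (h1 i hi.1).2, (h2 i hi.2).1 ]]
  have hrw : ∀ i j : V, (a1 i - a1 j) - (a2 i - a2 j) = (a1 i - a2 i) - (a1 j - a2 j) := by
    intros; ring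
  have hsum_nonneg : 0 ≤ ∑ i ∈ S, ∑ j ∈ S, |(a1 i - a1 j) - (a2 i - a2 j)| :=
    Finset.sum_nonneg fun i _ => Finset.sum_nonneg fun j _ => abs_nonneg _
  have hbound := key_sum_bound S (fun i => a1 i - a2 i) (ℓ - u) (u - ℓ) (by linarith) hΔ
  rw [← hm] at hbound
  have hbound' : ∑ i ∈ S, ∑ j ∈ S, |(a1 i - a1 j) - (a2 i - a2 j)| ≤
      4 * (u - ℓ) * ((m + 1) / 2 : ℕ) * ((m / 2 : ℕ) : ℝ) := by
    calc ∑ i ∈ S, ∑ j ∈ S, |(a1 i - a1 j) - (a2 i - a2 j)|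
        = ∑ i ∈ S, ∑ j ∈ S, |(a1 i - a2 i) - (a1 j - a2 j)| := by
          simp only [hrw]
      _ ≤ 2 * (((m + 1) / 2 : ℕ) : ℝ) * ((m / 2 : ℕ) : ℝ) * ((u - ℓ) - (ℓ - u)) := hbound
      _ = 4 * (u - ℓ) * ((m + 1) / 2 : ℕ) * ((m / 2 : ℕ) : ℝ) := by ring
  constructor
  · rw [hd]
    exact mul_nonneg hCpos.le hsum_nonneg
  · rw [hd]
    calc C * ∑ i ∈ S, ∑ j ∈ S, |(a1 i - a1 j) - (a2 i - a2 j)|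
        ≤ C * (4 * (u - ℓ) * ((m + 1) / 2 : ℕ) * ((m / 2 : ℕ) : ℝ)) :=
          mul_le_mul_of_nonneg_left hbound' hCpos.le
      _ = 1 := by rw [hC]; exact inv_mul_cancel₀ (ne_of_gt hdenpos)
end

section
/- The sum Σ_{i∈S} Σ_{j∈S} |(a¹_i - a¹_j) - (a²_i - a²_j)| is at most 4·R·⌈m/2⌉·⌊m/2⌋ when both ratings take values in an interval of length R, where m = |S|; hence d_NPCK ≤ 1. -/
open Finset

private lemma double_insert {V : Type*} [DecidableEq V] (f : V → V → ℝ) (a : V)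
    (T : Finset V) (ha : a ∉ T) :
    ∑ i ∈ insert a T, ∑ j ∈ insert a T, f i j
      = f a a + ∑ j ∈ T, f a j + ∑ i ∈ T, f i a + ∑ i ∈ T, ∑ j ∈ T, f i j := by
  rw [Finset.sum_insert ha, Finset.sum_insert ha]
  have : ∑ i ∈ T, ∑ j ∈ insert a T, f i j
      = ∑ i ∈ T, (f i a + ∑ j ∈ T, f i j) := by
    refine Finset.sum_congr rfl fun i _ => ?_
    rw [Finset.sum_insert ha]
  rw [this, Finset.sum_add_distrib]
  ring

private lemma nat_key (n : ℕ) :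
    ((n + 1 : ℕ) + ((n + 1) / 2 : ℕ) * ((n / 2 : ℕ)) : ℕ)
      = (((n + 3) / 2 : ℕ) * ((n + 2) / 2 : ℕ) : ℕ) := by
  rcases Nat.even_or_odd n with ⟨k, hk⟩ | ⟨k, hk⟩
  · subst hk
    have h1 : (k + k + 1) / 2 = k := by omega
    have h2 : (k + k) / 2 = k := by omega
    have h3 : (k + k + 3) / 2 = k + 1 := by omega
    have h4 : (k + k + 2) / 2 = k + 1 := by omega
    rw [h1, h2, h3, h4]; ring
  · subst hk
    have h1 : (2 * k + 1 + 1) / 2 = k + 1 := by omega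
    have h2 : (2 * k + 1) / 2 = k := by omega
    have h3 : (2 * k + 1 + 3) / 2 = k + 2 := by omega
    have h4 : (2 * k + 1 + 2) / 2 = k + 1 := by omega
    rw [h1, h2, h3, h4]; ring

private lemma key {V : Type*} [DecidableEq V] (b : V → ℝ) (L U : ℝ) (S : Finset V)
    (hb : ∀ i ∈ S, b i ∈ Set.Icc L U) :
    ∑ i ∈ S, ∑ j ∈ S, |b i - b j|
      ≤ 2 * (U - L) * ((S.card + 1) / 2 : ℕ) * ((S.card / 2 : ℕ) : ℝ) := by
  induction S using Finset.strongInduction with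
  | _ S ih =>
    rcases S.eq_empty_or_nonempty with rfl | hS
    · simp
    obtain ⟨i0, hi0, hmax⟩ := S.exists_max_image b hS
    obtain ⟨j0, hj0, hmin⟩ := S.exists_min_image b hS
    have hD : (0:ℝ) ≤ U - L := by
      have := hb i0 hi0
      simp only [Set.mem_Icc] at this
      linarith [this.1, this.2]
    by_cases hij : i0 = j0
    · have hz : ∀ i ∈ S, ∀ j ∈ S, |b i - b j| = (0:ℝ) := by
        intro i hi j hj
        have h1 := hmax i hi
        have h2 := hmin i hi
        have h4 := hmax j hj
        have h5 := hmin j hj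
        rw [hij] at h1 h4
        have : b i = b j := by linarith
        simp [this]
      rw [Finset.sum_congr rfl fun i hi => Finset.sum_congr rfl (hz i hi)]
      simp only [Finset.sum_const_zero]
      positivity
    · set T := S.erase i0 with hT
      have hj0T : j0 ∈ T := Finset.mem_erase.2 ⟨fun h => hij h.symm, hj0⟩
      set T' := T.erase j0 with hT'
      have hi0T : i0 ∉ T := Finset.notMem_erase _ _
      have hj0T' : j0 ∉ T' := Finset.notMem_erase _ _
      have hS1 : insert i0 T = S := Finset.insert_erase hi0
      have hT1 : insert j0 T' = T := Finset.insert_erase hj0T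
      have hsub : T' ⊂ S :=
        Finset.ssubset_of_subset_of_ssubset (Finset.erase_subset _ _)
          (Finset.erase_ssubset hi0)
      have hsubS : ∀ i ∈ T', i ∈ S := fun i hi => hsub.1 hi
      -- cardinalities
      set n := T'.card with hn
      have hcT : T.card = n + 1 := by rw [← hT1, Finset.card_insert_of_notMem hj0T']
      have hcS : S.card = n + 2 := by
        rw [← hS1, Finset.card_insert_of_notMem hi0T, hcT]
      -- decompose the double sum
      have hdec : ∑ i ∈ S, ∑ j ∈ S, |b i - b j|
          = 2 * ∑ j ∈ T, |b i0 - b j|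
            + 2 * ∑ j ∈ T', |b j0 - b j|
            + ∑ i ∈ T', ∑ j ∈ T', |b i - b j| := by
        rw [← hS1, double_insert _ _ _ hi0T, ← hT1, double_insert _ _ _ hj0T']
        have e1 : ∑ i ∈ insert j0 T', |b i - b i0| = ∑ j ∈ insert j0 T', |b i0 - b j| := by
          refine Finset.sum_congr rfl fun i _ => abs_sub_comm _ _
        have e2 : ∑ i ∈ T', |b i - b j0| = ∑ j ∈ T', |b j0 - b j| := by
          refine Finset.sum_congr rfl fun i _ => abs_sub_comm _ _
        rw [e1, e2, hT1]
        simp only [sub_self, abs_zero]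
        ring
      rw [hdec]
      -- bound the boundary terms
      have hbd : ∑ j ∈ T, |b i0 - b j| + ∑ j ∈ T', |b j0 - b j|
          ≤ (n + 1 : ℕ) * (U - L) := by
        rw [← hT1, Finset.sum_insert hj0T', add_assoc, ← Finset.sum_add_distrib]
        have hterm : ∀ j ∈ T', |b i0 - b j| + |b j0 - b j| ≤ U - L := by
          intro j hj
          have hjS : j ∈ S := hsub.1 hj
          have h1 : b j ≤ b i0 := hmax j hjS
          have h2 : b j0 ≤ b j := hmin j hjS
          have h3 := hb i0 hi0
          have h4 := hb j0 hj0
          simp only [Set.mem_Icc] at h3 h4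
          rw [abs_of_nonneg (by linarith), abs_of_nonpos (by linarith)]
          linarith
        have h0 : |b i0 - b j0| ≤ U - L := by
          have h1 : b j0 ≤ b i0 := hmax j0 hj0
          have h3 := hb i0 hi0
          have h4 := hb j0 hj0
          simp only [Set.mem_Icc] at h3 h4
          rw [abs_of_nonneg (by linarith)]
          linarith
        calc |b i0 - b j0| + ∑ j ∈ T', (|b i0 - b j| + |b j0 - b j|)
            ≤ (U - L) + ∑ j ∈ T', (U - L) := by
              gcongr with j hj
              exact hterm j hj
          _ = (n + 1 : ℕ) * (U - L) := by
              rw [Finset.sum_const, hn]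
              push_cast
              ring
      have hih := ih T' hsub (fun i hi => hb i (hsub.1 hi))
      have hnat := nat_key n
      have hnatR : ((n:ℝ) + 1) + (((n + 1) / 2 : ℕ) : ℝ) * ((n / 2 : ℕ) : ℝ)
          = (((n + 3) / 2 : ℕ) : ℝ) * (((n + 2) / 2 : ℕ) : ℝ) := by
        exact_mod_cast congrArg (Nat.cast : ℕ → ℝ) hnat
      rw [hcS]
      have goal_eq : (2 : ℝ) * (U - L) * (((n + 2 + 1) / 2 : ℕ) : ℝ) * (((n + 2) / 2 : ℕ) : ℝ)
          = 2 * (U - L) * ((((n + 3) / 2 : ℕ) : ℝ) * (((n + 2) / 2 : ℕ) : ℝ)) := by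
        norm_num; ring
      rw [goal_eq, ← hnatR]
      have : (2:ℝ) * ∑ j ∈ T, |b i0 - b j| + 2 * ∑ j ∈ T', |b j0 - b j|
          ≤ 2 * ((n + 1 : ℕ) * (U - L)) := by linarith
      push_cast at this ⊢
      nlinarith [hih, hD]

/-- The double sum of absolute differences of separation gaps is bounded by
`4·R·⌈m/2⌉·⌊m/2⌋`, hence the NPCK distance is at most 1. -/
theorem npck_sum_le {V : Type*} [DecidableEq V]
    (S : Finset V) (m : ℕ) (hm : m = S.card)
    (a1 a2 : V → ℝ) (ℓ u : ℝ) (R : ℝ) (hR : R = u - ℓ)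
    (h1 : ∀ i ∈ S, a1 i ∈ Set.Icc ℓ u) (h2 : ∀ i ∈ S, a2 i ∈ Set.Icc ℓ u) :
    ∑ i ∈ S, ∑ j ∈ S, |(a1 i - a1 j) - (a2 i - a2 j)|
      ≤ 4 * R * ((m + 1) / 2 : ℕ) * ((m / 2 : ℕ) : ℝ) := by
  have hb : ∀ i ∈ S, (fun i => a1 i - a2 i) i ∈ Set.Icc (ℓ - u) (u - ℓ) := by
    intro i hi
    have := h1 i hi
    have := h2 i hi
    simp only [Set.mem_Icc] at *
    constructor <;> linarith [(h1 i hi).1, (h1 i hi).2, (h2 i hi).1, (h2 i hi).2]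
  have hk := key (fun i => a1 i - a2 i) (ℓ - u) (u - ℓ) S hb
  have heq : ∀ i ∈ S, ∀ j ∈ S,
      |(a1 i - a1 j) - (a2 i - a2 j)| = |(a1 i - a2 i) - (a1 j - a2 j)| := by
    intro i _ j _
    ring_nf
  calc ∑ i ∈ S, ∑ j ∈ S, |(a1 i - a1 j) - (a2 i - a2 j)|
      = ∑ i ∈ S, ∑ j ∈ S, |(a1 i - a2 i) - (a1 j - a2 j)| := by
        refine Finset.sum_congr rfl fun i hi => Finset.sum_congr rfl fun j hj => heq i hi j hj
    _ ≤ 2 * ((u - ℓ) - (ℓ - u)) * ((S.card + 1) / 2 : ℕ) * ((S.card / 2 : ℕ) : ℝ) := hk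
    _ = 4 * R * ((m + 1) / 2 : ℕ) * ((m / 2 : ℕ) : ℝ) := by
        rw [hm, hR]; ring
end

section
/- For a complete ranking case with two judges ranking the same m ≥ 2 objects, m·(m-1)·d_NPKS(b¹, b²) equals twice the number of rank reversals plus the number of half reversals, i.e., 2·|{(i,j) : i<j, b¹ and b² strictly disagree on order}| + |{(i,j) : i<j, exactly one of b¹, b² ties i and j}|. -/
open Finset

lemma sign_tri (x : ℝ) : Real.sign x = -1 ∧ x ≠ 0 ∨ Real.sign x = 0 ∧ x = 0 ∨ Real.sign x = 1 ∧ x ≠ 0 := by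
  rcases lt_trichotomy x 0 with h|h|h
  exacts [Or.inl ⟨Real.sign_of_neg h, h.ne⟩, Or.inr (Or.inl ⟨by simp [h], h⟩),
    Or.inr (Or.inr ⟨Real.sign_of_pos h, h.ne'⟩)]

open Classical in
lemma key_s15 (x y : ℝ) : |Real.sign x - Real.sign y| =
    2 * (if Real.sign x = -Real.sign y ∧ Real.sign x ≠ 0 then (1:ℝ) else 0) +
    (if Xor (x = 0) (y = 0) then (1:ℝ) else 0) := by
  rcases sign_tri x with ⟨h1,h2⟩|⟨h1,h2⟩|⟨h1,h2⟩ <;> rcases sign_tri y with ⟨h3,h4⟩|⟨h3,h4⟩|⟨h3,h4⟩ <;>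
    simp [h1, h2, h3, h4, Xor] <;> norm_num

/-- For complete rankings of the same `m ≥ 2` objects, `m(m-1)·d_NPKS` equals twice
the number of strict rank reversals plus the number of half reversals. -/
theorem npks_counts_reversals {V : Type*} [DecidableEq V] [LinearOrder V]
    (S : Finset V) (m : ℕ) (hm : m = S.card) (hm2 : 2 ≤ m)
    (b1 b2 : V → ℝ)
    (d : ℝ)
    (hd : d = ((m : ℝ) ^ 2 - m)⁻¹ * ∑ i ∈ S, ∑ j ∈ S,
        (1 / 2) * |Real.sign (b1 i - b1 j) - Real.sign (b2 i - b2 j)|) :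
    (m : ℝ) * (m - 1) * d =
      2 * ((S ×ˢ S).filter (fun p => p.1 < p.2 ∧
          Real.sign (b1 p.1 - b1 p.2) = -Real.sign (b2 p.1 - b2 p.2) ∧
          Real.sign (b1 p.1 - b1 p.2) ≠ 0)).card
      + ((S ×ˢ S).filter (fun p => p.1 < p.2 ∧
          Xor (b1 p.1 = b1 p.2) (b2 p.1 = b2 p.2))).card := by
  classical
  set g : V × V → ℝ := fun p => |Real.sign (b1 p.1 - b1 p.2) - Real.sign (b2 p.1 - b2 p.2)|
    with hg
  -- symmetry of g
  have hgsymm : ∀ p : V × V, g p.swap = g p := by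
    intro ⟨i, j⟩
    simp only [hg, Prod.swap_prod_mk]
    rw [show b1 j - b1 i = -(b1 i - b1 j) by ring, show b2 j - b2 i = -(b2 i - b2 j) by ring,
      Real.sign_neg, Real.sign_neg, show -Real.sign (b1 i - b1 j) - -Real.sign (b2 i - b2 j)
        = -(Real.sign (b1 i - b1 j) - Real.sign (b2 i - b2 j)) by ring, abs_neg]
  -- reduce LHS to the full double sum with coefficient 1/2
  have hmne : ((m : ℝ) ^ 2 - (m : ℝ)) ≠ 0 := by
    have h2 : (2 : ℝ) ≤ (m : ℝ) := by exact_mod_cast hm2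
    nlinarith
  have hlhs : (m : ℝ) * (m - 1) * d = (1/2) * ∑ p ∈ S ×ˢ S, g p := by
    have hsum : ∑ i ∈ S, ∑ j ∈ S,
        (1 / 2) * |Real.sign (b1 i - b1 j) - Real.sign (b2 i - b2 j)|
        = (1/2) * ∑ p ∈ S ×ˢ S, g p := by
      rw [Finset.sum_product, Finset.mul_sum]
      refine Finset.sum_congr rfl fun i _ => ?_
      rw [Finset.mul_sum]
    rw [hd, hsum, show (m : ℝ) * (m - 1) = (m : ℝ)^2 - m by ring, ← mul_assoc,
      mul_inv_cancel₀ hmne, one_mul]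
  -- split the full sum into < and ¬<
  have hsplit : ∑ p ∈ S ×ˢ S, g p
      = 2 * ∑ p ∈ (S ×ˢ S).filter (fun p => p.1 < p.2), g p := by
    rw [← Finset.sum_filter_add_sum_filter_not (S ×ˢ S) (fun p => p.1 < p.2) g]
    have h1 : ∑ p ∈ (S ×ˢ S).filter (fun p => ¬ p.1 < p.2), g p
        = ∑ p ∈ (S ×ˢ S).filter (fun p => p.2 < p.1), g p := by
      rw [← Finset.sum_filter_of_ne (s := (S ×ˢ S).filter (fun p => ¬ p.1 < p.2))
        (p := fun p => p.2 < p.1) (f := g)]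
      · rw [Finset.filter_filter]
        apply Finset.sum_congr _ (fun _ _ => rfl)
        apply Finset.filter_congr
        intro p _
        constructor
        · exact fun h => h.2
        · exact fun h => ⟨fun h' => absurd h (lt_asymm h'), h⟩
      · intro p hp hne
        rcases lt_trichotomy p.1 p.2 with h|h|h
        · exact absurd h (Finset.mem_filter.mp hp).2
        · exfalso; apply hne; simp [hg, h]
        · exact h
    rw [h1]
    have h2 : ∑ p ∈ (S ×ˢ S).filter (fun p => p.2 < p.1), g p
        = ∑ p ∈ (S ×ˢ S).filter (fun p => p.1 < p.2), g p := by
      apply Finset.sum_nbij' (i := Prod.swap) (j := Prod.swap)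
      · intro p hp
        simp only [Finset.mem_filter, Finset.mem_product] at hp ⊢
        exact ⟨⟨hp.1.2, hp.1.1⟩, hp.2⟩
      · intro p hp
        simp only [Finset.mem_filter, Finset.mem_product] at hp ⊢
        exact ⟨⟨hp.1.2, hp.1.1⟩, hp.2⟩
      · intro p _; exact Prod.swap_swap p
      · intro p _; exact Prod.swap_swap p
      · intro p _; exact (hgsymm p).symm
    rw [h2]; ring
  rw [hlhs, hsplit]
  rw [show (1/2 : ℝ) * (2 * ∑ p ∈ (S ×ˢ S).filter (fun p => p.1 < p.2), g p)
    = ∑ p ∈ (S ×ˢ S).filter (fun p => p.1 < p.2), g p by ring]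
  -- pointwise decomposition via key
  have hpt : ∑ p ∈ (S ×ˢ S).filter (fun p => p.1 < p.2), g p
      = ∑ p ∈ (S ×ˢ S).filter (fun p => p.1 < p.2),
        (2 * (if Real.sign (b1 p.1 - b1 p.2) = -Real.sign (b2 p.1 - b2 p.2) ∧
              Real.sign (b1 p.1 - b1 p.2) ≠ 0 then (1:ℝ) else 0) +
         (if Xor (b1 p.1 = b1 p.2) (b2 p.1 = b2 p.2) then (1:ℝ) else 0)) := by
    apply Finset.sum_congr rfl
    intro p _
    rw [hg]
    simp only
    rw [key_s15 (b1 p.1 - b1 p.2) (b2 p.1 - b2 p.2)]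
    congr 1
    congr 1
    rw [sub_eq_zero, sub_eq_zero]
  rw [hpt, Finset.sum_add_distrib, ← Finset.mul_sum, Finset.sum_boole, Finset.sum_boole,
    Finset.filter_filter, Finset.filter_filter]
end
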